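/- In the running of the generalized deferred acceptance algorithm, the set Y^(i) ∪ R^(i) of considered contracts is nondecreasing in i: Y^(i−1) ∪ R^(i−1) ⊆ Y^(i) ∪ R^(i) for all i ≥ 2. -/
import Mathlib


/-- In the generalized deferred acceptance algorithm
(`R⁰ = ∅`; `Yⁱ = Ch_D(X \ Rⁱ⁻¹)` where each doctor chooses her most preferred
remaining acceptable contract, `Zⁱ = Ch_H(Yⁱ)`, `Rⁱ = Rⁱ⁻¹ ∪ (Yⁱ \ Zⁱ)`), the set
`Yⁱ ∪ Rⁱ` of considered contracts is nondecreasing in `i`: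
`Yⁱ⁻¹ ∪ Rⁱ⁻¹ ⊆ Yⁱ ∪ Rⁱ` for all `i ≥ 2`.  Doctor preferences are encoded by a rank
function `rk` (strict on each doctor's contracts, lower rank preferred) together with
an acceptability predicate `acc`. -/
theorem generalizedDA_considered_monotone {ι D : Type*} [DecidableEq ι]
    (X : Finset ι) (doc : ι → D) (acc : ι → Prop) (rk : ι → ℕ)
    (hstrict : ∀ x y : ι, x ≠ y → doc x = doc y → rk x ≠ rk y)
    (ChD ChH : Finset ι → Finset ι)
    (hChD : ∀ (S : Finset ι) (x : ι), x ∈ ChD S ↔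
      x ∈ S ∧ acc x ∧ ∀ y ∈ S, y ≠ x → doc y = doc x → acc y → rk x < rk y)
    (Y Z R : ℕ → Finset ι)
    (hR0 : R 0 = ∅)
    (hY : ∀ i, Y (i + 1) = ChD (X \ R i))
    (hZ : ∀ i, Z (i + 1) = ChH (Y (i + 1)))
    (hR : ∀ i, R (i + 1) = R i ∪ (Y (i + 1) \ Z (i + 1)))
    (i : ℕ) (hi : 2 ≤ i) :
    Y (i - 1) ∪ R (i - 1) ⊆ Y i ∪ R i := by
  obtain ⟨j, rfl⟩ : ∃ j, i = j + 2 := ⟨i - 2, by omega⟩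
  have h1 : j + 2 - 1 = j + 1 := rfl
  rw [h1]
  intro x hx
  rcases Finset.mem_union.1 hx with hx | hx
  · by_cases hz : x ∈ Z (j + 1)
    · apply Finset.mem_union_left
      have hx' := (hChD (X \ R j) x).1 (by rwa [← hY j])
      obtain ⟨hmem, hacc, hmin⟩ := hx'
      rw [Finset.mem_sdiff] at hmem
      rw [hY, hChD]
      refine ⟨Finset.mem_sdiff.2 ⟨hmem.1, ?_⟩, hacc, ?_⟩
      · rw [hR]
        simp only [Finset.mem_union, Finset.mem_sdiff, not_or]
        exact ⟨hmem.2, fun h => h.2 hz⟩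
      · intro y hy hne hdoc haccy
        apply hmin y _ hne hdoc haccy
        rw [Finset.mem_sdiff] at hy ⊢
        refine ⟨hy.1, fun h => hy.2 ?_⟩
        rw [hR]
        exact Finset.mem_union_left _ h
    · apply Finset.mem_union_right
      rw [hR (j+1)]
      apply Finset.mem_union_left
      rw [hR j]
      exact Finset.mem_union_right _ (Finset.mem_sdiff.2 ⟨hx, hz⟩)
  · apply Finset.mem_union_right
    rw [hR (j+1)]
    exact Finset.mem_union_left _ hx
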